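/- Suppose real numbers M(f) ≥ 0, H(f) ≥ 0, N(f) satisfy the Gagliardo-Nirenberg inequality -N(f) ≤ C_opt H(f)^{3/2} M(f)^{1/2} with C_opt = (2/3)(H(φ)M(φ))^{-1/2} for some fixed positive numbers H(φ), M(φ), and set N(φ)M(φ) = -(2/3) H(φ)M(φ). If -N(f) M(f) ≤ (1-η)·(-N(φ)M(φ)) for some η ∈ (0,1) and N(f) < 0, then -N(f) ≤ (2/3)(1-η)^{1/3} H(f); consequently G(f) := H(f) + (3/2)N(f) ≥ (1 - (1-η)^{1/3}) H(f). -/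

import Mathlib

/-- Coercivity estimate: under the sharp Gagliardo-Nirenberg inequality with
`C_opt = (2/3)(H_φ M_φ)^{-1/2}` and `-N_φ M_φ = (2/3) H_φ M_φ`, the smallness
condition `-N(f)M(f) ≤ (1-η)(-N_φ M_φ)` yields `-N(f) ≤ (2/3)(1-η)^{1/3} H(f)`
and `G(f) = H(f) + (3/2)N(f) ≥ (1 - (1-η)^{1/3}) H(f)`. -/
theorem coercivity_estimate (Mf Hf Nf Hphi Mphi η : ℝ)
    (hMf : 0 ≤ Mf) (hHf : 0 ≤ Hf) (hHphi : 0 < Hphi) (hMphi : 0 < Mphi)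
    (hη : η ∈ Set.Ioo (0 : ℝ) 1)
    (hGN : -Nf ≤ (2 / 3) * (Hphi * Mphi) ^ (-(1 : ℝ) / 2) *
      Hf ^ ((3 : ℝ) / 2) * Mf ^ ((1 : ℝ) / 2))
    (hsmall : -Nf * Mf ≤ (1 - η) * ((2 / 3) * (Hphi * Mphi)))
    (hNf : Nf < 0) :
    -Nf ≤ (2 / 3) * (1 - η) ^ ((1 : ℝ) / 3) * Hf ∧
    Hf + (3 / 2) * Nf ≥ (1 - (1 - η) ^ ((1 : ℝ) / 3)) * Hf := by
  obtain ⟨hη0, hη1⟩ := hη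
  have ha : 0 < -Nf := by linarith
  have h1η : (0:ℝ) < 1 - η := by linarith
  rcases eq_or_lt_of_le hMf with hM0 | hM0
  · exfalso
    rw [← hM0, Real.zero_rpow (by norm_num : (1:ℝ)/2 ≠ 0), mul_zero] at hGN
    linarith
  -- key: -Nf ≤ (2/3)(1-η)^{1/3} Hf
  have hHM : 0 < Hphi * Mphi := mul_pos hHphi hMphi
  have hrhs : (0:ℝ) ≤ (2 / 3) * (Hphi * Mphi) ^ (-(1 : ℝ) / 2) *
      Hf ^ ((3 : ℝ) / 2) * Mf ^ ((1 : ℝ) / 2) := by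
    positivity
  have hsq : (-Nf)^2 ≤ (2/3)^2 * (Hphi * Mphi)⁻¹ * Hf^3 * Mf := by
    have := mul_self_le_mul_self (le_of_lt ha) hGN
    calc (-Nf)^2 = (-Nf) * (-Nf) := sq ..
      _ ≤ _ := this
      _ = (2/3)^2 * ((Hphi*Mphi) ^ (-(1:ℝ)/2) * (Hphi*Mphi) ^ (-(1:ℝ)/2))
            * (Hf ^ ((3:ℝ)/2) * Hf ^ ((3:ℝ)/2)) * (Mf ^ ((1:ℝ)/2) * Mf ^ ((1:ℝ)/2)) := by
          ring
      _ = (2/3)^2 * (Hphi * Mphi)⁻¹ * Hf^3 * Mf := by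
          rw [← Real.rpow_add hHM, ← Real.rpow_add' hHf (by norm_num),
            ← Real.rpow_add' hMf (by norm_num)]
          norm_num
          left
          rw [Real.rpow_neg_one, mul_inv]
          exact Or.inl (mul_comm _ _)
  have hcube : (-Nf)^3 * Mf ≤ ((2/3) * (1-η) ^ ((1:ℝ)/3) * Hf)^3 * Mf := by
    have hc : ((1-η) ^ ((1:ℝ)/3))^3 = 1 - η := by
      rw [← Real.rpow_natCast ((1-η) ^ ((1:ℝ)/3)) 3, ← Real.rpow_mul h1η.le]
      norm_num
    have h2 : (-Nf)^2 * (-Nf * Mf) ≤ ((2/3)^2 * (Hphi * Mphi)⁻¹ * Hf^3 * Mf) *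
        ((1 - η) * ((2 / 3) * (Hphi * Mphi))) := by
      apply mul_le_mul hsq hsmall (by positivity) (by positivity)
    calc (-Nf)^3 * Mf = (-Nf)^2 * (-Nf * Mf) := by ring
      _ ≤ _ := h2
      _ = ((2/3) * (1-η) ^ ((1:ℝ)/3) * Hf)^3 * Mf := by
          field_simp
          rw [hc]
  have hkey : -Nf ≤ (2 / 3) * (1 - η) ^ ((1 : ℝ) / 3) * Hf := by
    have h3 : (-Nf)^3 ≤ ((2/3) * (1-η) ^ ((1:ℝ)/3) * Hf)^3 :=
      le_of_mul_le_mul_right hcube hM0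
    exact le_of_pow_le_pow_left₀ (by norm_num) (by positivity) h3
  exact ⟨hkey, by linarith⟩
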